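/- Let X be a Noetherian topological space, f : X → X a continuous surjective map, m ≥ 1 an integer, and E ⊆ X a closed subset such that (f^[m])⁻¹(E) ⊆ E. Then (f^[m])⁻¹(E) = E and f^[m](E) = E; moreover the set Ẽ := ⋃_{i=0}^{m-1} (f^[i])⁻¹(E) satisfies f⁻¹(Ẽ) = Ẽ and f(Ẽ) = Ẽ. -/

import Mathlib

/-- On a Noetherian topological space, if `E` is closed and `(f^[m])⁻¹(E) ⊆ E` for
a continuous surjective `f` and some `m ≥ 1`, then `(f^[m])⁻¹(E) = E`,
`f^[m](E) = E`, and `Ẽ := ⋃_{i<m} (f^[i])⁻¹(E)` is totally invariant under `f`. -/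
theorem stmt_17 {X : Type*} [TopologicalSpace X] [TopologicalSpace.NoetherianSpace X]
    (f : X → X) (hf_cont : Continuous f) (hf_surj : Function.Surjective f)
    (m : ℕ) (hm : 1 ≤ m) (E : Set X) (hE_cl : IsClosed E)
    (hE : f^[m] ⁻¹' E ⊆ E) :
    f^[m] ⁻¹' E = E ∧ f^[m] '' E = E ∧
    f ⁻¹' (⋃ i ∈ Finset.range m, f^[i] ⁻¹' E) = (⋃ i ∈ Finset.range m, f^[i] ⁻¹' E) ∧
    f '' (⋃ i ∈ Finset.range m, f^[i] ⁻¹' E) = (⋃ i ∈ Finset.range m, f^[i] ⁻¹' E) := by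
  set g := f^[m] with hg
  have hg_cont : Continuous g := hf_cont.iterate m
  have hg_surj : Function.Surjective g := hf_surj.iterate m
  -- the descending chain of closed sets
  set C : ℕ → TopologicalSpace.Closeds X := fun n =>
    ⟨g^[n] ⁻¹' E, hE_cl.preimage (hg_cont.iterate n)⟩ with hC
  have hanti : ∀ n, (C (n + 1) : Set X) ⊆ C n := by
    intro n
    simp only [hC, TopologicalSpace.Closeds.coe_mk, Function.iterate_succ',
      Function.comp_apply, Set.preimage_comp]
    exact Set.preimage_mono hE
  -- find n with C (n+1) = C n
  have hstab : ∃ n, C (n + 1) = C n := by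
    by_contra h
    push_neg at h
    have hlt : ∀ n, C (n + 1) < C n := fun n =>
      lt_of_le_of_ne (by exact_mod_cast hanti n) (h n)
    exact (RelEmbedding.natGT C hlt).not_wellFounded
      wellFounded_lt
  obtain ⟨n, hn⟩ := hstab
  have hgn_surj : Function.Surjective g^[n] := hg_surj.iterate n
  have hkey : g ⁻¹' E = E := by
    apply hgn_surj.preimage_injective
    have h2 := congrArg (fun s : TopologicalSpace.Closeds X => (s : Set X)) hn
    simp only [hC, TopologicalSpace.Closeds.coe_mk] at h2
    rwa [Function.iterate_succ', Set.preimage_comp] at h2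
  have himg : g '' E = E := by
    conv_lhs => rw [← hkey]
    exact Set.image_preimage_eq E hg_surj
  refine ⟨hkey, himg, ?_, ?_⟩
  · -- preimage of the union
    have : f ⁻¹' (⋃ i ∈ Finset.range m, f^[i] ⁻¹' E) =
        ⋃ i ∈ Finset.range m, f^[i + 1] ⁻¹' E := by
      simp [Set.preimage_iUnion, Function.iterate_succ, Set.preimage_comp]
    rw [this]
    ext x
    simp only [Set.mem_iUnion, Finset.mem_range, exists_prop]
    constructor
    · rintro ⟨i, hi, hx⟩
      rcases eq_or_lt_of_le (Nat.succ_le_of_lt hi) with h | h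
      · refine ⟨0, by omega, ?_⟩
        simp only [Function.iterate_zero, Set.mem_preimage, id_eq]
        have h' : i + 1 = m := by omega
        rw [h'] at hx
        exact hE hx
      · exact ⟨i + 1, h, hx⟩
    · rintro ⟨i, hi, hx⟩
      rcases Nat.eq_zero_or_pos i with rfl | hpos
      · refine ⟨m - 1, by omega, ?_⟩
        have : m - 1 + 1 = m := by omega
        rw [this]
        simp only [Function.iterate_zero, Set.mem_preimage, id_eq] at hx
        show x ∈ g ⁻¹' E
        rw [hkey]; exact hx
      · exact ⟨i - 1, by omega, by rwa [Nat.sub_add_cancel hpos]⟩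
  · -- image of the union
    have hpre : f ⁻¹' (⋃ i ∈ Finset.range m, f^[i] ⁻¹' E) =
        ⋃ i ∈ Finset.range m, f^[i] ⁻¹' E := by
      -- reuse the previous computation
      have : f ⁻¹' (⋃ i ∈ Finset.range m, f^[i] ⁻¹' E) =
          ⋃ i ∈ Finset.range m, f^[i + 1] ⁻¹' E := by
        simp [Set.preimage_iUnion, Function.iterate_succ, Set.preimage_comp]
      rw [this]
      ext x
      simp only [Set.mem_iUnion, Finset.mem_range, exists_prop]
      constructor
      · rintro ⟨i, hi, hx⟩
        rcases eq_or_lt_of_le (Nat.succ_le_of_lt hi) with h | h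
        · refine ⟨0, by omega, ?_⟩
          simp only [Function.iterate_zero, Set.mem_preimage, id_eq]
          have h' : i + 1 = m := by omega
          rw [h'] at hx
          exact hE hx
        · exact ⟨i + 1, h, hx⟩
      · rintro ⟨i, hi, hx⟩
        rcases Nat.eq_zero_or_pos i with rfl | hpos
        · refine ⟨m - 1, by omega, ?_⟩
          have : m - 1 + 1 = m := by omega
          rw [this]
          simp only [Function.iterate_zero, Set.mem_preimage, id_eq] at hx
          show x ∈ g ⁻¹' E
          rw [hkey]; exact hx
        · exact ⟨i - 1, by omega, by rwa [Nat.sub_add_cancel hpos]⟩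
    conv_lhs => rw [← hpre]
    exact Set.image_preimage_eq _ hf_surj
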